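/- For integers k ≥ 2 and n ≥ 3: if TS_k(G) contains a clique of size n, then G contains a clique of size n. In particular, if TS_k(G) contains a triangle, then G contains a triangle. -/

import Mathlib

open SimpleGraph

/-- `I` is an independent (stable) set of `G`. -/
def IsIndep {V : Type*} (G : SimpleGraph V) (I : Finset V) : Prop :=
  ∀ u ∈ I, ∀ v ∈ I, ¬ G.Adj u v

/-- Vertices of the `TS_k`-reconfiguration graph: size-`k` independent sets of `G`. -/
abbrev TSVert {V : Type*} (G : SimpleGraph V) (k : ℕ) := {I : Finset V // I.card = k ∧ IsIndep G I}

/-- The `TS_k`-reconfiguration graph of `G`: size-`k` independent sets, adjacent iff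
`I \ J = {u}`, `J \ I = {v}` and `uv ∈ E(G)`. -/
def TSk {V : Type*} [DecidableEq V] (G : SimpleGraph V) (k : ℕ) : SimpleGraph (TSVert G k) :=
  SimpleGraph.fromRel (fun I J =>
    ∃ u v, (I : Finset V) \ (J : Finset V) = {u} ∧
      (J : Finset V) \ (I : Finset V) = {v} ∧ G.Adj u v)

lemma adj_elim {V : Type*} [DecidableEq V] {G : SimpleGraph V} {k : ℕ} {I J : TSVert G k}
    (h : (TSk G k).Adj I J) :
    ∃ u v, (I : Finset V) \ (J : Finset V) = {u} ∧
      (J : Finset V) \ (I : Finset V) = {v} ∧ G.Adj u v := by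
  rw [TSk, fromRel_adj] at h
  rcases h with ⟨hne, h | h⟩
  · exact h
  · obtain ⟨u, v, h1, h2, h3⟩ := h
    exact ⟨v, u, h2, h1, h3.symm⟩

/-- If `TS_k(G)` contains a clique of size `n` (`k ≥ 2`, `n ≥ 3`), then so does `G`. -/
theorem stmt9 {V : Type*} [DecidableEq V] (G : SimpleGraph V) (k n : ℕ)
    (hk : 2 ≤ k) (hn : 3 ≤ n)
    (S : Finset (TSVert G k)) (hS : (TSk G k).IsNClique n S) :
    ∃ T : Finset V, G.IsNClique n T := by
  have hcard : 1 < S.card := by rw [hS.2]; omega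
  obtain ⟨I, hI, J, hJ, hIJne⟩ := Finset.one_lt_card.mp hcard
  have hIJ : (TSk G k).Adj I J := hS.1 hI hJ hIJne
  obtain ⟨a, b, hIa, hJb, hab⟩ := adj_elim hIJ
  set A : Finset V := (I : Finset V) ∩ (J : Finset V) with hA
  have hAI : A ⊆ (I : Finset V) := Finset.inter_subset_left
  have hAJ : A ⊆ (J : Finset V) := Finset.inter_subset_right
  have hAcard : A.card = k - 1 := by
    have h1 : ((I : Finset V) \ J).card + A.card = (I : Finset V).card :=
      Finset.card_sdiff_add_card_inter _ _
    rw [hIa, I.2.1, Finset.card_singleton] at h1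
    omega
  -- every member of the clique contains the core A
  have hcore : ∀ K ∈ S, A ⊆ (K : Finset V) := by
    intro K hK
    by_cases hKI : K = I
    · subst hKI; exact hAI
    by_cases hKJ : K = J
    · subst hKJ; exact hAJ
    have hIK := hS.1 hI hK (fun h => hKI h.symm)
    have hJK := hS.1 hJ hK (fun h => hKJ h.symm)
    obtain ⟨u1, v1, hIK1, hKI1, hadj1⟩ := adj_elim hIK
    obtain ⟨u2, v2, hJK1, hKJ1, hadj2⟩ := adj_elim hJK
    intro x hx
    by_contra hxK
    have hxI : x ∈ (I : Finset V) := (Finset.mem_inter.mp hx).1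
    have hxJ : x ∈ (J : Finset V) := (Finset.mem_inter.mp hx).2
    have hxu1 : x = u1 := by
      have hm : x ∈ (I : Finset V) \ K := Finset.mem_sdiff.mpr ⟨hxI, hxK⟩
      rw [hIK1] at hm; exact Finset.mem_singleton.mp hm
    have hxu2 : x = u2 := by
      have hm : x ∈ (J : Finset V) \ K := Finset.mem_sdiff.mpr ⟨hxJ, hxK⟩
      rw [hJK1] at hm; exact Finset.mem_singleton.mp hm
    have haIJ : a ∈ (I : Finset V) \ J := by rw [hIa]; exact Finset.mem_singleton_self a
    have haI : a ∈ (I : Finset V) := (Finset.mem_sdiff.mp haIJ).1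
    have haJ : a ∉ (J : Finset V) := (Finset.mem_sdiff.mp haIJ).2
    have haK : a ∈ (K : Finset V) := by
      by_contra h
      have hm : a ∈ (I : Finset V) \ K := Finset.mem_sdiff.mpr ⟨haI, h⟩
      rw [hIK1] at hm
      exact haJ ((Finset.mem_singleton.mp hm ▸ hxu1 ▸ hxJ))
    have hav2 : a = v2 := by
      have hm : a ∈ (K : Finset V) \ J := Finset.mem_sdiff.mpr ⟨haK, haJ⟩
      rw [hKJ1] at hm; exact Finset.mem_singleton.mp hm
    exact I.2.2 x hxI a haI (hxu2 ▸ hav2 ▸ hadj2)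
  -- each member is the core plus one extra vertex
  have hsing : ∀ K ∈ S, ∃ c, (K : Finset V) \ A = {c} := by
    intro K hK
    apply Finset.card_eq_one.mp
    rw [Finset.card_sdiff_of_subset (hcore K hK), K.2.1, hAcard]
    omega
  have hrecon : ∀ K ∈ S, ∀ x, (K : Finset V) \ A = {x} → (K : Finset V) = insert x A := by
    intro K hK x hx
    have := Finset.sdiff_union_of_subset (hcore K hK)
    rw [hx] at this
    rw [← this, Finset.insert_eq]
  -- extras of distinct members are distinct and adjacent
  have hkey : ∀ K ∈ S, ∀ L ∈ S, K ≠ L → ∀ x y, (K : Finset V) \ A = {x} →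
      (L : Finset V) \ A = {y} → x ≠ y ∧ G.Adj x y := by
    intro K hK L hL hKL x y hx hy
    have hxy : x ≠ y := by
      intro h
      apply hKL
      apply Subtype.ext
      rw [hrecon K hK x hx, hrecon L hL y hy, h]
    have hxK : x ∈ (K : Finset V) ∧ x ∉ A := by
      have : x ∈ (K : Finset V) \ A := by rw [hx]; exact Finset.mem_singleton_self x
      exact Finset.mem_sdiff.mp this
    have hyL : y ∈ (L : Finset V) ∧ y ∉ A := by
      have : y ∈ (L : Finset V) \ A := by rw [hy]; exact Finset.mem_singleton_self y
      exact Finset.mem_sdiff.mp this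
    have hKLx : (K : Finset V) \ L = {x} := by
      apply Finset.Subset.antisymm
      · calc (K : Finset V) \ L ⊆ (K : Finset V) \ A :=
              Finset.sdiff_subset_sdiff (Finset.Subset.refl _) (hcore L hL)
          _ = {x} := hx
      · intro z hz
        rw [Finset.mem_singleton] at hz
        subst hz
        refine Finset.mem_sdiff.mpr ⟨hxK.1, ?_⟩
        rw [hrecon L hL y hy, Finset.mem_insert]
        push_neg
        exact ⟨hxy, hxK.2⟩
    have hLKy : (L : Finset V) \ K = {y} := by
      apply Finset.Subset.antisymm
      · calc (L : Finset V) \ K ⊆ (L : Finset V) \ A :=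
              Finset.sdiff_subset_sdiff (Finset.Subset.refl _) (hcore K hK)
          _ = {y} := hy
      · intro z hz
        rw [Finset.mem_singleton] at hz
        subst hz
        refine Finset.mem_sdiff.mpr ⟨hyL.1, ?_⟩
        rw [hrecon K hK x hx, Finset.mem_insert]
        push_neg
        exact ⟨hxy.symm, hyL.2⟩
    obtain ⟨u, v, hu, hv, huv⟩ := adj_elim (hS.1 hK hL hKL)
    have hux : u = x := by
      rw [hKLx] at hu; exact (Finset.singleton_injective hu.symm)
    have hvy : v = y := by
      rw [hLKy] at hv; exact (Finset.singleton_injective hv.symm)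
    exact ⟨hxy, hux ▸ hvy ▸ huv⟩
  refine ⟨S.biUnion (fun K => (K : Finset V) \ A), ?_, ?_⟩
  · intro x hx y hy hxy
    simp only [Finset.coe_biUnion, Set.mem_iUnion, Finset.mem_coe, Finset.mem_biUnion] at hx hy
    obtain ⟨K, hK, hxK⟩ := hx
    obtain ⟨L, hL, hyL⟩ := hy
    obtain ⟨cK, hcK⟩ := hsing K hK
    obtain ⟨cL, hcL⟩ := hsing L hL
    have hxcK : x = cK := by rw [hcK] at hxK; exact Finset.mem_singleton.mp hxK
    have hycL : y = cL := by rw [hcL] at hyL; exact Finset.mem_singleton.mp hyL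
    have hKL : K ≠ L := by
      intro h
      apply hxy
      subst h
      rw [hcK] at hcL
      rw [hxcK, hycL]
      exact Finset.singleton_injective hcL
    exact hxcK ▸ hycL ▸ (hkey K hK L hL hKL cK cL hcK hcL).2
  · rw [Finset.card_biUnion, ← hS.2]
    · rw [Finset.card_eq_sum_ones S]
      apply Finset.sum_congr rfl
      intro K hK
      obtain ⟨c, hc⟩ := hsing K hK
      rw [hc, Finset.card_singleton]
    · intro K hK L hL hKL
      obtain ⟨cK, hcK⟩ := hsing K hK
      obtain ⟨cL, hcL⟩ := hsing L hL
      simp only [Function.onFun]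
      rw [hcK, hcL, Finset.disjoint_singleton]
      exact (hkey K hK L hL hKL cK cL hcK hcL).1
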